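/- Generator estimate for the Euler nonlinearity: Let d ≥ 2 and let u : ℤ^d → ℂ^d be a family of vectors (the Fourier coefficients of a vector field u on 𝕋^d), such that ∑_α e^{z|α|}|u_α| < ∞ and ∑_α |α| e^{z|α|}|u_α| < ∞ for some z ≥ 0, where |u_α| is the Euclidean norm on ℂ^d. For α ∈ ℤ^d, α ≠ 0, let ℙ_α be the d×d matrix with entries (ℙ_α)_{jk} = δ_{jk} − α_j α_k / |α|² (the Leray projector in Fourier variables), and ℙ₀ = Id. Then the Fourier coefficients w_α = ℙ_α ∑_{β∈ℤ^d} (u_β · i(α−β)) u_{α−β} of the Leray-projected nonlinearity ℙ(u·∇u) satisfy ∑_{α∈ℤ^d} e^{z|α|} |w_α| ≤ (∑_{β∈ℤ^d} e^{z|β|} |u_β|) · (∑_{γ∈ℤ^d} |γ| e^{z|γ|} |u_γ|), i.e. Gen[ℙ(u·∇u)](z) ≤ Gen[u](z) · ∂_z Gen[u](z). -/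

import Mathlib

open scoped ENNReal

/-- Euclidean norm of a lattice point `α ∈ ℤ^d`. -/
noncomputable def anorm {d : ℕ} (α : Fin d → ℤ) : ℝ :=
  Real.sqrt (∑ i, ((α i : ℝ)) ^ 2)

/-- Euclidean norm of a vector in `ℂ^d`. -/
noncomputable def cnorm {d : ℕ} (v : Fin d → ℂ) : ℝ :=
  Real.sqrt (∑ j, ‖v j‖ ^ 2)

/-- The Leray projector in Fourier variables: for `α ≠ 0` the matrix with
entries `δ_{jk} − α_j α_k / |α|²`, and the identity for `α = 0`. -/
noncomputable def leray {d : ℕ} (α : Fin d → ℤ) : Matrix (Fin d) (Fin d) ℂ :=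
  if α = 0 then 1 else
    Matrix.of fun j k =>
      (if j = k then 1 else 0) - (α j : ℂ) * (α k : ℂ) / (∑ i, (α i : ℂ) ^ 2)

section helpers

variable {d : ℕ}

lemma anorm_nonneg (α : Fin d → ℤ) : 0 ≤ anorm α := Real.sqrt_nonneg _
lemma cnorm_nonneg (v : Fin d → ℂ) : 0 ≤ cnorm v := Real.sqrt_nonneg _

lemma anorm_eq_norm (α : Fin d → ℤ) :
    anorm α = ‖(WithLp.equiv 2 (Fin d → ℝ)).symm (fun i => (α i : ℝ))‖ := by
  rw [EuclideanSpace.norm_eq]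
  simp [anorm, Real.norm_eq_abs, sq_abs]

lemma anorm_triangle (α β : Fin d → ℤ) : anorm α ≤ anorm β + anorm (α - β) := by
  rw [anorm_eq_norm, anorm_eq_norm, anorm_eq_norm]
  have h : (WithLp.equiv 2 (Fin d → ℝ)).symm (fun i => ((α : Fin d → ℤ) i : ℝ))
      = (WithLp.equiv 2 (Fin d → ℝ)).symm (fun i => (β i : ℝ))
        + (WithLp.equiv 2 (Fin d → ℝ)).symm (fun i => ((α - β) i : ℝ)) := by
    ext i
    simp only [WithLp.equiv_symm_apply, WithLp.ofLp_toLp, PiLp.add_apply, Pi.sub_apply]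
    push_cast
    ring
  rw [h]
  exact norm_add_le _ _

lemma cnorm_eq_norm (v : Fin d → ℂ) :
    cnorm v = ‖(WithLp.equiv 2 (Fin d → ℂ)).symm v‖ := by
  rw [EuclideanSpace.norm_eq]
  simp [cnorm]

lemma cnorm_eq_sqrt_normSq (v : Fin d → ℂ) :
    cnorm v = Real.sqrt (∑ j, Complex.normSq (v j)) := by
  simp [cnorm, Complex.sq_norm]

lemma cnorm_smul (c : ℂ) (v : Fin d → ℂ) :
    cnorm (c • v) = ‖c‖ * cnorm v := by
  have : ∀ j, ‖(c • v) j‖ ^ 2 = ‖c‖ ^ 2 * ‖v j‖ ^ 2 := by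
    intro j
    simp [Pi.smul_apply, smul_eq_mul, norm_mul, mul_pow]
  rw [cnorm, cnorm]
  simp only [this, ← Finset.mul_sum]
  rw [Real.sqrt_mul (by positivity), Real.sqrt_sq (by positivity)]

lemma cnorm_leray_mulVec_le (α : Fin d → ℤ) (v : Fin d → ℂ) :
    cnorm ((leray α).mulVec v) ≤ cnorm v := by
  rcases eq_or_ne α 0 with h | h
  · simp [leray, h, Matrix.one_mulVec]
  · set A : ℝ := ∑ i, ((α i : ℝ)) ^ 2 with hA_def
    have hA : 0 < A := by
      obtain ⟨i, hi⟩ := Function.ne_iff.mp h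
      refine Finset.sum_pos' (fun j _ => by positivity) ⟨i, Finset.mem_univ i, ?_⟩
      have : (α i : ℝ) ≠ 0 := by exact_mod_cast hi
      positivity
    have hAc : ((A : ℝ) : ℂ) = ∑ i, ((α i : ℂ)) ^ 2 := by
      rw [hA_def]
      push_cast
      ring
    set s : ℂ := ∑ k, (α k : ℂ) * v k with hs_def
    set c : ℂ := s / (A : ℂ) with hc_def
    have hmv : ∀ j, (leray α).mulVec v j = v j - (α j : ℂ) * c := by
      intro j
      simp only [leray, if_neg h, Matrix.mulVec, dotProduct, Matrix.of_apply,
        sub_mul, Finset.sum_sub_distrib, ite_mul, one_mul, zero_mul,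
        Finset.sum_ite_eq, Finset.mem_univ, if_true]
      rw [← hAc]
      congr 1
      rw [hc_def, hs_def, Finset.sum_div, Finset.mul_sum]
      exact Finset.sum_congr rfl fun x _ => by ring
    -- key quadratic estimate
    have expand : ∀ j, Complex.normSq (v j - (α j : ℂ) * c)
        = Complex.normSq (v j) + ((α j : ℝ)) ^ 2 * Complex.normSq c
          - 2 * (((α j : ℂ) * v j * (starRingEnd ℂ) c).re) := by
      intro j
      rw [Complex.normSq_sub]
      have h1 : Complex.normSq ((α j : ℂ) * c) = ((α j : ℝ)) ^ 2 * Complex.normSq c := by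
        rw [Complex.normSq_mul]
        congr 1
        have : ((α j : ℤ) : ℂ) = (((α j : ℝ)) : ℂ) := by push_cast; ring
        rw [this, Complex.normSq_ofReal, sq]
      have h2 : v j * (starRingEnd ℂ) ((α j : ℂ) * c) = (α j : ℂ) * v j * (starRingEnd ℂ) c := by
        rw [map_mul, map_intCast]
        ring
      rw [h1, h2]
    have key : ∑ j, Complex.normSq (v j - (α j : ℂ) * c) ≤ ∑ j, Complex.normSq (v j) := by
      have hsum : ∑ j, Complex.normSq (v j - (α j : ℂ) * c)
          = (∑ j, Complex.normSq (v j)) + A * Complex.normSq c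
            - 2 * ((s * (starRingEnd ℂ) c).re) := by
        simp only [expand]
        rw [Finset.sum_sub_distrib, Finset.sum_add_distrib, ← Finset.sum_mul,
          ← Finset.mul_sum]
        congr 1
        rw [← Complex.re_sum, ← Finset.sum_mul, hs_def]
      rw [hsum]
      have hsc : (s * (starRingEnd ℂ) c).re = Complex.normSq s / A := by
        rw [hc_def, map_div₀, Complex.conj_ofReal]
        have : s * ((starRingEnd ℂ) s / (A : ℂ)) = ((Complex.normSq s / A : ℝ) : ℂ) := by
          rw [mul_div_assoc', Complex.mul_conj]
          push_cast
          ring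
        rw [this, Complex.ofReal_re]
      have hnc : Complex.normSq c = Complex.normSq s / (A * A) := by
        rw [hc_def, Complex.normSq_div, Complex.normSq_ofReal]
      rw [hsc, hnc]
      have hs0 : 0 ≤ Complex.normSq s := Complex.normSq_nonneg s
      have hAne : A ≠ 0 := ne_of_gt hA
      have : A * (Complex.normSq s / (A * A)) = Complex.normSq s / A := by
        field_simp
      rw [this]
      have : 0 ≤ Complex.normSq s / A := by positivity
      linarith
    rw [cnorm_eq_sqrt_normSq, cnorm_eq_sqrt_normSq]
    apply Real.sqrt_le_sqrt
    calc ∑ j, Complex.normSq ((leray α).mulVec v j)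
        = ∑ j, Complex.normSq (v j - (α j : ℂ) * c) := by
          exact Finset.sum_congr rfl fun j _ => by rw [hmv j]
      _ ≤ ∑ j, Complex.normSq (v j) := key


lemma coef_bound (w : Fin d → ℂ) (γ : Fin d → ℤ) :
    ‖∑ j, w j * (Complex.I * (γ j : ℂ))‖ ≤ cnorm w * anorm γ := by
  calc ‖∑ j, w j * (Complex.I * (γ j : ℂ))‖
      ≤ ∑ j, ‖w j * (Complex.I * (γ j : ℂ))‖ := by
        simpa using norm_sum_le Finset.univ (fun j => w j * (Complex.I * (γ j : ℂ)))
    _ = ∑ j, ‖w j‖ * |((γ j : ℝ))| := by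
        refine Finset.sum_congr rfl fun j _ => ?_
        rw [norm_mul, norm_mul, Complex.norm_I, one_mul]
        congr 1
        rw [Complex.norm_intCast]

    _ ≤ Real.sqrt (∑ j, ‖w j‖ ^ 2) * Real.sqrt (∑ j, |((γ j : ℝ))| ^ 2) :=
        Real.sum_mul_le_sqrt_mul_sqrt _ _ _
    _ = cnorm w * anorm γ := by
      rw [cnorm, anorm]
      congr 2
      exact Finset.sum_congr rfl fun j _ => by rw [sq_abs]

lemma cnorm_as_e (v : Fin d → ℂ) :
    cnorm v = ‖(PiLp.continuousLinearEquiv 2 ℂ (fun _ : Fin d => ℂ)).symm v‖ := by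
  rw [cnorm_eq_norm]
  rfl

lemma cnorm_tsum_le {ι : Type*} (f : ι → Fin d → ℂ)
    (h : Summable fun i => cnorm (f i)) :
    cnorm (∑' i, f i) ≤ ∑' i, cnorm (f i) := by
  have hc := cnorm_as_e (d := d)
  rw [hc, ContinuousLinearEquiv.map_tsum]
  refine le_trans (norm_tsum_le_tsum_norm ?_) ?_
  · refine h.congr fun i => ?_
    rw [← hc]
  · exact le_of_eq (tsum_congr fun i => (hc (f i)).symm)

lemma exp_anorm_le (z : ℝ) (hz : 0 ≤ z) (α β : Fin d → ℤ) :
    Real.exp (z * anorm α) ≤ Real.exp (z * anorm β) * Real.exp (z * anorm (α - β)) := by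
  rw [← Real.exp_add]
  apply Real.exp_le_exp.mpr
  rw [← mul_add]
  exact mul_le_mul_of_nonneg_left (anorm_triangle α β) hz

end helpers

theorem gen_euler_nonlinearity_le {d : ℕ} (hd : 2 ≤ d)
    (u : (Fin d → ℤ) → (Fin d → ℂ)) (z : ℝ) (hz : 0 ≤ z)
    (h1 : Summable fun α : Fin d → ℤ => Real.exp (z * anorm α) * cnorm (u α))
    (h2 : Summable fun α : Fin d → ℤ =>
      anorm α * Real.exp (z * anorm α) * cnorm (u α)) :
    ∑' α : Fin d → ℤ,
        ENNReal.ofReal (Real.exp (z * anorm α) *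
          cnorm ((leray α).mulVec
            (∑' β : Fin d → ℤ,
              (∑ j, u β j * (Complex.I * ((α j : ℂ) - (β j : ℂ)))) • u (α - β))))
      ≤ ENNReal.ofReal
          ((∑' β : Fin d → ℤ, Real.exp (z * anorm β) * cnorm (u β)) *
           (∑' γ : Fin d → ℤ, anorm γ * Real.exp (z * anorm γ) * cnorm (u γ))) := by
  classical
  set F : (Fin d → ℤ) → ℝ := fun β => Real.exp (z * anorm β) * cnorm (u β) with hF
  set G : (Fin d → ℤ) → ℝ := fun γ => anorm γ * Real.exp (z * anorm γ) * cnorm (u γ) with hG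
  have hF0 : ∀ β, 0 ≤ F β := fun β => mul_nonneg (Real.exp_pos _).le (cnorm_nonneg _)
  have hG0 : ∀ γ, 0 ≤ G γ :=
    fun γ => mul_nonneg (mul_nonneg (anorm_nonneg _) (Real.exp_pos _).le) (cnorm_nonneg _)
  have hone : ∀ γ : Fin d → ℤ, (1 : ℝ) ≤ Real.exp (z * anorm γ) := fun γ =>
    Real.one_le_exp (mul_nonneg hz (anorm_nonneg γ))
  have h1' : Summable fun β : Fin d → ℤ => cnorm (u β) :=
    Summable.of_nonneg_of_le (fun β => cnorm_nonneg _)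
      (fun β => le_mul_of_one_le_left (cnorm_nonneg _) (hone β)) h1
  have h2' : Summable fun γ : Fin d → ℤ => anorm γ * cnorm (u γ) :=
    Summable.of_nonneg_of_le
      (fun γ => mul_nonneg (anorm_nonneg _) (cnorm_nonneg _))
      (fun γ => by
        have h := hone γ
        have h3 := anorm_nonneg γ
        have h4 := cnorm_nonneg (u γ)
        simp only [hG]
        nlinarith [mul_nonneg (mul_nonneg h3 h4) (sub_nonneg.mpr h)]) h2
  set M : ℝ := ∑' γ : Fin d → ℤ, anorm γ * cnorm (u γ) with hM_def
  have hM : ∀ γ, anorm γ * cnorm (u γ) ≤ M := fun γ =>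
    h2'.le_tsum γ (fun j _ => mul_nonneg (anorm_nonneg _) (cnorm_nonneg _))
  set MG : ℝ := ∑' γ : Fin d → ℤ, G γ with hMG_def
  have hMG : ∀ γ, G γ ≤ MG := fun γ => h2.le_tsum γ (fun j _ => hG0 j)
  have key : ∀ α : Fin d → ℤ,
      ENNReal.ofReal (Real.exp (z * anorm α) *
          cnorm ((leray α).mulVec
            (∑' β : Fin d → ℤ,
              (∑ j, u β j * (Complex.I * ((α j : ℂ) - (β j : ℂ)))) • u (α - β))))
        ≤ ∑' β : Fin d → ℤ, ENNReal.ofReal (F β) * ENNReal.ofReal (G (α - β)) := by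
    intro α
    set c : (Fin d → ℤ) → ℂ :=
      fun β => ∑ j, u β j * (Complex.I * ((α j : ℂ) - (β j : ℂ))) with hc
    have hcb : ∀ β, ‖c β‖ ≤ cnorm (u β) * anorm (α - β) := by
      intro β
      have hrw : c β = ∑ j, u β j * (Complex.I * (((α - β) j : ℂ))) := by
        refine Finset.sum_congr rfl fun j _ => ?_
        push_cast [Pi.sub_apply]
        ring
      rw [hrw]
      exact coef_bound (u β) (α - β)
    have hterm : ∀ β, cnorm (c β • u (α - β))
        ≤ cnorm (u β) * (anorm (α - β) * cnorm (u (α - β))) := by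
      intro β
      rw [cnorm_smul]
      calc ‖c β‖ * cnorm (u (α - β))
          ≤ (cnorm (u β) * anorm (α - β)) * cnorm (u (α - β)) :=
            mul_le_mul_of_nonneg_right (hcb β) (cnorm_nonneg _)
        _ = _ := by ring
    have hsum_rhs : Summable fun β : Fin d → ℤ =>
        cnorm (u β) * (anorm (α - β) * cnorm (u (α - β))) :=
      Summable.of_nonneg_of_le
        (fun β => mul_nonneg (cnorm_nonneg _) (mul_nonneg (anorm_nonneg _) (cnorm_nonneg _)))
        (fun β => mul_le_mul_of_nonneg_left (hM (α - β)) (cnorm_nonneg _))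
        (h1'.mul_right M)
    have hsum_norm : Summable fun β : Fin d → ℤ => cnorm (c β • u (α - β)) :=
      Summable.of_nonneg_of_le (fun β => cnorm_nonneg _) hterm hsum_rhs
    have hT : cnorm ((leray α).mulVec (∑' β : Fin d → ℤ, c β • u (α - β)))
        ≤ ∑' β : Fin d → ℤ, cnorm (u β) * (anorm (α - β) * cnorm (u (α - β))) :=
      (cnorm_leray_mulVec_le _ _).trans
        ((cnorm_tsum_le _ hsum_norm).trans (Summable.tsum_le_tsum hterm hsum_norm hsum_rhs))
    have hFG : Summable fun β : Fin d → ℤ => F β * G (α - β) :=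
      Summable.of_nonneg_of_le (fun β => mul_nonneg (hF0 β) (hG0 _))
        (fun β => mul_le_mul_of_nonneg_left (hMG (α - β)) (hF0 β)) (h1.mul_right MG)
    have hstep : Real.exp (z * anorm α) *
        cnorm ((leray α).mulVec (∑' β : Fin d → ℤ, c β • u (α - β)))
        ≤ ∑' β : Fin d → ℤ, F β * G (α - β) := by
      calc Real.exp (z * anorm α) *
            cnorm ((leray α).mulVec (∑' β : Fin d → ℤ, c β • u (α - β)))
          ≤ Real.exp (z * anorm α) *
            ∑' β : Fin d → ℤ, cnorm (u β) * (anorm (α - β) * cnorm (u (α - β))) :=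
            mul_le_mul_of_nonneg_left hT (Real.exp_pos _).le
        _ = ∑' β : Fin d → ℤ, Real.exp (z * anorm α) *
              (cnorm (u β) * (anorm (α - β) * cnorm (u (α - β)))) := tsum_mul_left.symm
        _ ≤ ∑' β : Fin d → ℤ, F β * G (α - β) := by
            refine Summable.tsum_le_tsum (fun β => ?_) (hsum_rhs.mul_left _) hFG
            have hexp := exp_anorm_le z hz α β
            calc Real.exp (z * anorm α) *
                  (cnorm (u β) * (anorm (α - β) * cnorm (u (α - β))))
                ≤ (Real.exp (z * anorm β) * Real.exp (z * anorm (α - β))) *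
                  (cnorm (u β) * (anorm (α - β) * cnorm (u (α - β)))) :=
                  mul_le_mul_of_nonneg_right hexp
                    (mul_nonneg (cnorm_nonneg _) (mul_nonneg (anorm_nonneg _) (cnorm_nonneg _)))
              _ = F β * G (α - β) := by rw [hF, hG]; ring
    calc ENNReal.ofReal (Real.exp (z * anorm α) *
            cnorm ((leray α).mulVec (∑' β : Fin d → ℤ, c β • u (α - β))))
        ≤ ENNReal.ofReal (∑' β : Fin d → ℤ, F β * G (α - β)) :=
          ENNReal.ofReal_le_ofReal hstep
      _ = ∑' β : Fin d → ℤ, ENNReal.ofReal (F β * G (α - β)) :=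
          ENNReal.ofReal_tsum_of_nonneg (fun β => mul_nonneg (hF0 β) (hG0 _)) hFG
      _ = ∑' β : Fin d → ℤ, ENNReal.ofReal (F β) * ENNReal.ofReal (G (α - β)) :=
          tsum_congr fun β => ENNReal.ofReal_mul (hF0 β)
  calc ∑' α : Fin d → ℤ,
        ENNReal.ofReal (Real.exp (z * anorm α) *
          cnorm ((leray α).mulVec
            (∑' β : Fin d → ℤ,
              (∑ j, u β j * (Complex.I * ((α j : ℂ) - (β j : ℂ)))) • u (α - β))))
      ≤ ∑' α : Fin d → ℤ, ∑' β : Fin d → ℤ,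
          ENNReal.ofReal (F β) * ENNReal.ofReal (G (α - β)) := ENNReal.tsum_le_tsum key
    _ = ∑' β : Fin d → ℤ, ∑' α : Fin d → ℤ,
          ENNReal.ofReal (F β) * ENNReal.ofReal (G (α - β)) := ENNReal.tsum_comm
    _ = ∑' β : Fin d → ℤ, ENNReal.ofReal (F β) *
          ∑' α : Fin d → ℤ, ENNReal.ofReal (G (α - β)) :=
        tsum_congr fun β => ENNReal.tsum_mul_left
    _ = ∑' β : Fin d → ℤ, ENNReal.ofReal (F β) *
          ∑' γ : Fin d → ℤ, ENNReal.ofReal (G γ) := by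
        refine tsum_congr fun β => ?_
        have he := (Equiv.subRight β).tsum_eq (fun γ => ENNReal.ofReal (G γ))
        simp only [Equiv.subRight_apply] at he
        rw [he]
    _ = (∑' β : Fin d → ℤ, ENNReal.ofReal (F β)) *
          ∑' γ : Fin d → ℤ, ENNReal.ofReal (G γ) := ENNReal.tsum_mul_right
    _ = ENNReal.ofReal
          ((∑' β : Fin d → ℤ, F β) * (∑' γ : Fin d → ℤ, G γ)) := by
        rw [ENNReal.ofReal_mul (tsum_nonneg fun β => hF0 β),
          ENNReal.ofReal_tsum_of_nonneg hF0 h1, ENNReal.ofReal_tsum_of_nonneg hG0 h2]
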